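/- Let S be a Singer cyclic group of PGL(3,q), let A1 and A2 be distinct points of PG(2,q), and let s be the unique element of S with A1^s = A2. Then the set of intersection points r ∩ r^s, as r ranges over the lines through A1, is a nondegenerate conic C of PG(2,q) passing through A1 and A2; moreover s maps the tangent line to C at A1 onto the line A1A2, and the line A1A2 onto the tangent line to C at A2. -/

import Mathlib

/-- Evaluation of the ternary quadratic form with coefficient vector
`a = (a11,a22,a33,a12,a13,a23)` at `x = (x1,x2,x3)`. -/
def Qeval {F : Type*} [CommRing F] (a : Fin 6 → F) (x : Fin 3 → F) : F :=
  a 0 * x 0 ^ 2 + a 1 * x 1 ^ 2 + a 2 * x 2 ^ 2 +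
    a 3 * x 0 * x 1 + a 4 * x 0 * x 2 + a 5 * x 1 * x 2

/-- A ternary quadratic form is degenerate if it factors into a product of
two linear forms over the algebraic closure. -/
def IsDegenerateBar (F : Type*) [Field F] (a : Fin 6 → F) : Prop :=
  ∃ u v : Fin 3 → AlgebraicClosure F, ∀ x : Fin 3 → AlgebraicClosure F,
    Qeval (fun i => algebraMap F (AlgebraicClosure F) (a i)) x =
      (∑ i, u i * x i) * (∑ i, v i * x i)

section

variable {F : Type*} [Field F]

/-- Incidence between a line (a point of the dual plane, with coefficient
vector `u`) and a point (with coordinate vector `w`) of PG(2,q). -/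
def IncPL (l p : Projectivization F (Fin 3 → F)) : Prop :=
  ∃ (u : Fin 3 → F) (hu : u ≠ 0) (w : Fin 3 → F) (hw : w ≠ 0),
    l = Projectivization.mk F u hu ∧ p = Projectivization.mk F w hw ∧
      ∑ i, u i * w i = 0

/-- The point `p` lies on the quadric with coefficient vector `a`. -/
def VanishAt (a : Fin 6 → F) (p : Projectivization F (Fin 3 → F)) : Prop :=
  ∃ (w : Fin 3 → F) (hw : w ≠ 0), p = Projectivization.mk F w hw ∧
    Qeval a w = 0

end

/- ######################################################################
   Auxiliary machinery
   ###################################################################### -/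

open Matrix

section Aux
variable {R : Type*} [CommRing R]

/-- 3x3 determinant of rows a,b,c. -/
def Dt (a b c : Fin 3 → R) : R :=
  a 0 * b 1 * c 2 - a 0 * b 2 * c 1 - a 1 * b 0 * c 2 + a 1 * b 2 * c 0 +
    a 2 * b 0 * c 1 - a 2 * b 1 * c 0

/-- cross product -/
def cr (a b : Fin 3 → R) : Fin 3 → R :=
  ![a 1 * b 2 - a 2 * b 1, a 2 * b 0 - a 0 * b 2, a 0 * b 1 - a 1 * b 0]

def Bco (w : Fin 3 → R) (N : Matrix (Fin 3) (Fin 3) R) (i j : Fin 3) : R :=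
  match i with
  | 0 => w 2 * N 1 j - w 1 * N 2 j
  | 1 => w 0 * N 2 j - w 2 * N 0 j
  | 2 => w 1 * N 0 j - w 0 * N 1 j

def coeffs (w : Fin 3 → R) (N : Matrix (Fin 3) (Fin 3) R) : Fin 6 → R := fun m =>
  match m with
  | 0 => Bco w N 0 0
  | 1 => Bco w N 1 1
  | 2 => Bco w N 2 2
  | 3 => Bco w N 0 1 + Bco w N 1 0
  | 4 => Bco w N 0 2 + Bco w N 2 0
  | 5 => Bco w N 1 2 + Bco w N 2 1

lemma Qeval_coeffs (w : Fin 3 → R) (N : Matrix (Fin 3) (Fin 3) R) (x : Fin 3 → R) :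
    Qeval (coeffs w N) x = Dt w x (N *ᵥ x) := by
  simp [Qeval, coeffs, Bco, Dt, Matrix.mulVec, dotProduct, Fin.sum_univ_three]
  ring

lemma Dt_eq_det (a b c : Fin 3 → R) : Dt a b c = (Matrix.of ![a, b, c]).det := by
  simp [Matrix.det_fin_three, Dt]

lemma Dt_self12 (a c : Fin 3 → R) : Dt a a c = 0 := by simp [Dt]; ring
lemma Dt_self13 (a b : Fin 3 → R) : Dt a b a = 0 := by simp [Dt]; ring
lemma Dt_self23 (a b : Fin 3 → R) : Dt a b b = 0 := by simp [Dt]; ring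
lemma Dt_rev (a b c : Fin 3 → R) : Dt a b c = - Dt c b a := by simp [Dt]; ring

lemma dot_cr (a b c : Fin 3 → R) : ∑ i, cr a b i * c i = Dt a b c := by
  simp [cr, Dt, Fin.sum_univ_three]; ring

lemma dot_cr' (a b c : Fin 3 → R) : ∑ i, c i * cr a b i = Dt a b c := by
  simp [cr, Dt, Fin.sum_univ_three]; ring

lemma Dt_span2 (a b : Fin 3 → R) (c d e g : R) :
    Dt a (c • a + d • b) (e • a + g • b) = 0 := by
  simp [Dt, Pi.add_apply, Pi.smul_apply, smul_eq_mul]; ring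

lemma cr_cr (a b x : Fin 3 → R) :
    cr (cr a b) x = (∑ i, x i * a i) • b - (∑ i, x i * b i) • a := by
  funext i
  fin_cases i <;>
    simp [cr, Fin.sum_univ_three, Pi.smul_apply, smul_eq_mul, Pi.sub_apply] <;> ring

lemma Dt_map {S : Type*} [CommRing S] (f : R →+* S) (a b c : Fin 3 → R) :
    f (Dt a b c) = Dt (f ∘ a) (f ∘ b) (f ∘ c) := by
  simp [Dt]

lemma coeffs_map {S : Type*} [CommRing S] (f : R →+* S) (w : Fin 3 → R)
    (N : Matrix (Fin 3) (Fin 3) R) :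
    (fun m => f (coeffs w N m)) = coeffs (f ∘ w) (N.map f) := by
  funext m
  fin_cases m <;> simp [coeffs, Bco, Matrix.map_apply]

lemma mulVec_map' {S : Type*} [CommRing S] (f : R →+* S) (N : Matrix (Fin 3) (Fin 3) R)
    (x : Fin 3 → R) : (N.map f) *ᵥ (f ∘ x) = f ∘ (N *ᵥ x) := by
  funext i
  simp [Matrix.mulVec, dotProduct, Fin.sum_univ_three, Matrix.map_apply]

end Aux

section AuxF
variable {K : Type*} [Field K]

lemma exists_ne_zero_coord {a : Fin 3 → K} (ha : a ≠ 0) : ∃ i, a i ≠ 0 := by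
  by_contra h
  push_neg at h
  exact ha (funext fun i => h i)

lemma eq_smul_of_cr_eq_zero {a b : Fin 3 → K} (ha : a ≠ 0) (h : cr a b = 0) :
    ∃ c : K, b = c • a := by
  have h0 : a 1 * b 2 - a 2 * b 1 = 0 := by simpa [cr] using congrFun h 0
  have h1 : a 2 * b 0 - a 0 * b 2 = 0 := by simpa [cr] using congrFun h 1
  have h2 : a 0 * b 1 - a 1 * b 0 = 0 := by simpa [cr] using congrFun h 2
  have e : ∀ p q : Fin 3, a p * b q = a q * b p := by
    intro p q
    fin_cases p <;> fin_cases q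
    · show a 0 * b 0 = a 0 * b 0; ring
    · show a 0 * b 1 = a 1 * b 0; linear_combination h2
    · show a 0 * b 2 = a 2 * b 0; linear_combination -h1
    · show a 1 * b 0 = a 0 * b 1; linear_combination -h2
    · show a 1 * b 1 = a 1 * b 1; ring
    · show a 1 * b 2 = a 2 * b 1; linear_combination h0
    · show a 2 * b 0 = a 0 * b 2; linear_combination h1
    · show a 2 * b 1 = a 1 * b 2; linear_combination -h0
    · show a 2 * b 2 = a 2 * b 2; ring
  obtain ⟨i, hi⟩ := exists_ne_zero_coord ha
  refine ⟨b i / a i, funext fun j => ?_⟩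
  have := e i j
  simp only [Pi.smul_apply, smul_eq_mul]
  field_simp
  linear_combination this

/-- From a vanishing determinant and independence of the first two rows,
express the third row as a combination. -/
lemma exists_comb {a b z : Fin 3 → K} (h : Dt a b z = 0)
    (hab : ∀ c d : K, c • a + d • b = 0 → c = 0 ∧ d = 0) :
    ∃ α β : K, z = α • a + β • b := by
  have hdet : (Matrix.of ![a, b, z]).det = 0 := by rw [← Dt_eq_det]; exact h
  obtain ⟨v, hv, hv0⟩ := Matrix.exists_vecMul_eq_zero_iff.2 hdet
  have hcomp : ∀ j, v 0 * a j + v 1 * b j + v 2 * z j = 0 := by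
    intro j
    have := congrFun hv0 j
    simpa [Matrix.vecMul, dotProduct, Fin.sum_univ_three, Matrix.of_apply] using this
  by_cases h2 : v 2 = 0
  · exfalso
    have := hab (v 0) (v 1) (funext fun j => by
      have := hcomp j
      simp only [Pi.add_apply, Pi.smul_apply, smul_eq_mul, Pi.zero_apply]
      linear_combination this - z j * h2)
    exact hv (funext fun j => by
      fin_cases j <;> simp [this.1, this.2, h2])
  · refine ⟨-(v 0) / v 2, -(v 1) / v 2, funext fun j => ?_⟩
    have := hcomp j
    simp only [Pi.add_apply, Pi.smul_apply, smul_eq_mul]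
    field_simp
    linear_combination this

lemma det_zero_of_perp {u a b c : Fin 3 → K} (hu : u ≠ 0)
    (h1 : ∑ i, u i * a i = 0) (h2 : ∑ i, u i * b i = 0) (h3 : ∑ i, u i * c i = 0) :
    Dt a b c = 0 := by
  rw [Dt_eq_det]
  apply Matrix.exists_mulVec_eq_zero_iff.1
  refine ⟨u, hu, funext fun i => ?_⟩
  simp only [Fin.sum_univ_three] at h1 h2 h3
  fin_cases i <;>
    (simp [Matrix.mulVec, dotProduct, Fin.sum_univ_three, Matrix.of_apply])
  · linear_combination h1
  · linear_combination h2
  · linear_combination h3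

lemma perp_perp {a b x : Fin 3 → K} (h1 : ∑ i, x i * a i = 0)
    (h2 : ∑ i, x i * b i = 0) (hab : cr a b ≠ 0) : ∃ c : K, x = c • cr a b := by
  apply eq_smul_of_cr_eq_zero hab
  rw [cr_cr, h1, h2]
  simp

lemma IncPL_mk {u w : Fin 3 → K} (hu : u ≠ 0) (hw : w ≠ 0)
    (h : ∑ i, u i * w i = 0) :
    IncPL (Projectivization.mk K u hu) (Projectivization.mk K w hw) :=
  ⟨u, hu, w, hw, rfl, rfl, h⟩

lemma IncPL_elim {l p : Projectivization K (Fin 3 → K)} (h : IncPL l p)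
    {u w : Fin 3 → K} (hu : u ≠ 0) (hw : w ≠ 0)
    (hl : l = Projectivization.mk K u hu) (hp : p = Projectivization.mk K w hw) :
    ∑ i, u i * w i = 0 := by
  obtain ⟨u', hu', w', hw', hl', hp', hsum⟩ := h
  have h1 : Projectivization.mk K u hu = Projectivization.mk K u' hu' := by
    rw [← hl, hl']
  have h2 : Projectivization.mk K w hw = Projectivization.mk K w' hw' := by
    rw [← hp, hp']
  obtain ⟨c, hc⟩ := (Projectivization.mk_eq_mk_iff K _ _ _ _).1 h1
  obtain ⟨d, hd⟩ := (Projectivization.mk_eq_mk_iff K _ _ _ _).1 h2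
  have hui : ∀ i, u i = (c : K) * u' i := fun i => by
    rw [← hc]; simp [Units.smul_def]
  have hwi : ∀ i, w i = (d : K) * w' i := fun i => by
    rw [← hd]; simp [Units.smul_def]
  simp only [Fin.sum_univ_three] at hsum ⊢
  rw [hui 0, hui 1, hui 2, hwi 0, hwi 1, hwi 2]
  linear_combination (c : K) * (d : K) * hsum

lemma dot_transpose (A : Matrix (Fin 3) (Fin 3) K) (u w : Fin 3 → K) :
    ∑ i, (Aᵀ *ᵥ u) i * w i = ∑ i, u i * (A *ᵥ w) i := by
  simp [Matrix.mulVec, dotProduct, Matrix.transpose_apply, Fin.sum_univ_three]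
  ring

lemma nondeg_aux (w1 : Fin 3 → K) (N : Matrix (Fin 3) (Fin 3) K)
    (hD : Dt w1 (N *ᵥ w1) (N *ᵥ (N *ᵥ w1)) ≠ 0) (u v : Fin 3 → K)
    (hQ : ∀ x, Dt w1 x (N *ᵥ x) = (∑ i, u i * x i) * (∑ i, v i * x i))
    (hu0 : ∑ i, u i * w1 i = 0) : False := by
  have hw1 : w1 ≠ 0 := by
    intro h; apply hD; rw [h]; simp [Dt]
  have hune : u ≠ 0 := by
    intro h; apply hD; rw [hQ]; subst h; simp
  let φ : (Fin 3 → K) →ₗ[K] K :=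
    { toFun := fun x => ∑ i, u i * x i
      map_add' := by
        intro x y; simp [mul_add, Finset.sum_add_distrib]
      map_smul' := by
        intro c x
        simp only [Pi.smul_apply, smul_eq_mul, RingHom.id_apply, Finset.mul_sum]
        exact Finset.sum_congr rfl fun i _ => by ring }
  have hφ : ∀ x, φ x = ∑ i, u i * x i := fun x => rfl
  have hsurj : LinearMap.range φ = ⊤ := by
    obtain ⟨i, hi⟩ := exists_ne_zero_coord hune
    rw [Submodule.eq_top_iff']
    intro z
    refine ⟨fun j => if j = i then z / u i else 0, ?_⟩
    rw [hφ]
    simp only [mul_ite, mul_zero]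
    rw [Finset.sum_ite_eq' Finset.univ i (fun j => u j * (z / u i))]
    simp [hi]
    field_simp
  have h3 : Module.finrank K (Fin 3 → K) = 3 := Module.finrank_fin_fun K
  have hker2 : Module.finrank K (LinearMap.ker φ) = 2 := by
    have hrn := LinearMap.finrank_range_add_finrank_ker φ
    rw [hsurj, finrank_top, Module.finrank_self, h3] at hrn
    omega
  have hlt : Submodule.span K {w1} < LinearMap.ker φ := by
    apply lt_of_le_of_ne
    · rw [Submodule.span_le, Set.singleton_subset_iff]
      exact LinearMap.mem_ker.2 hu0
    · intro he
      have h1 := finrank_span_singleton hw1 (K := K)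
      rw [he, hker2] at h1
      omega
  obtain ⟨y, hyk, hyn⟩ := SetLike.exists_of_lt hlt
  have hu_y : ∑ i, u i * y i = 0 := LinearMap.mem_ker.1 hyk
  have hind : ∀ c d : K, c • w1 + d • y = 0 → c = 0 ∧ d = 0 := by
    intro c d hcd
    by_cases hdz : d = 0
    · refine ⟨?_, hdz⟩
      rw [hdz, zero_smul, add_zero] at hcd
      rcases smul_eq_zero.1 hcd with h | h
      · exact h
      · exact absurd h hw1
    · exfalso
      apply hyn
      have hy : y = (-c/d) • w1 := by
        funext j
        have hj := congrFun hcd j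
        simp only [Pi.add_apply, Pi.smul_apply, smul_eq_mul, Pi.zero_apply] at hj
        simp only [Pi.smul_apply, smul_eq_mul]
        field_simp
        linear_combination hj
      rw [hy]
      exact Submodule.smul_mem _ _ (Submodule.mem_span_singleton_self w1)
  have hQy : Dt w1 y (N *ᵥ y) = 0 := by rw [hQ, hu_y, zero_mul]
  have hQwy : Dt w1 (w1 + y) (N *ᵥ (w1 + y)) = 0 := by
    rw [hQ]
    have hz : ∑ i, u i * (w1 + y) i = 0 := by
      simp only [Pi.add_apply, mul_add, Finset.sum_add_distrib, hu0, hu_y, add_zero]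
    rw [hz, zero_mul]
  have hkey : Dt w1 y (N *ᵥ w1) = 0 := by
    have hexp : Dt w1 (w1 + y) (N *ᵥ (w1 + y)) =
        Dt w1 w1 (N *ᵥ w1) + Dt w1 w1 (N *ᵥ y) + Dt w1 y (N *ᵥ w1) + Dt w1 y (N *ᵥ y) := by
      simp [Dt, Matrix.mulVec_add, Pi.add_apply]; ring
    rw [hQwy, Dt_self12, Dt_self12, hQy] at hexp
    simpa using hexp.symm
  obtain ⟨α, β, hNw1⟩ := exists_comb hkey hind
  obtain ⟨γ, δ, hNy⟩ := exists_comb hQy hind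
  apply hD
  have hN2 : N *ᵥ (N *ᵥ w1) = (α*α + β*γ) • w1 + (α*β + β*δ) • y := by
    conv_lhs => rw [hNw1]
    rw [Matrix.mulVec_add, Matrix.mulVec_smul, Matrix.mulVec_smul, hNw1, hNy]
    funext j
    simp only [Pi.add_apply, Pi.smul_apply, smul_eq_mul]
    ring
  rw [hN2, hNw1]
  exact Dt_span2 w1 y α β _ _

end AuxF

lemma singer_key {F : Type*} [Field F] (M : GL (Fin 3) F)
    (act : Projectivization F (Fin 3 → F) → Projectivization F (Fin 3 → F))
    (hact : ∀ (v : Fin 3 → F) (hv : v ≠ 0) (hv' : M.val.mulVec v ≠ 0),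
      act (Projectivization.mk F v hv) = Projectivization.mk F (M.val.mulVec v) hv')
    (hreg : ∀ p p' : Projectivization F (Fin 3 → F), ∃ k : ℕ, act^[k] p = p')
    (u : Fin 3 → F) (hu : u ≠ 0) :
    Dt u (M.val *ᵥ u) (M.val *ᵥ (M.val *ᵥ u)) ≠ 0 := by
  intro h0
  have hML : (M⁻¹ : GL (Fin 3) F).val * M.val = 1 := by
    rw [← Units.val_mul, inv_mul_cancel]; rfl
  have hMinj : ∀ z : Fin 3 → F, z ≠ 0 → M.val *ᵥ z ≠ 0 := by
    intro z hz hzz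
    apply hz
    have : (M⁻¹ : GL (Fin 3) F).val *ᵥ (M.val *ᵥ z) = z := by
      rw [mulVec_mulVec, hML, one_mulVec]
    rw [← this, hzz, mulVec_zero]
  set W : Submodule F (Fin 3 → F) := Submodule.span F {u, M.val *ᵥ u} with hW
  have huW : u ∈ W := Submodule.subset_span (by left; rfl)
  have hMuW : M.val *ᵥ u ∈ W := Submodule.subset_span (by right; rfl)
  have hM2 : M.val *ᵥ (M.val *ᵥ u) ∈ W := by
    by_cases hdep : ∀ c d : F, c • u + d • (M.val *ᵥ u) = 0 → c = 0 ∧ d = 0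
    · obtain ⟨α, β, hc⟩ := exists_comb h0 hdep
      rw [hc]
      exact Submodule.add_mem _ (Submodule.smul_mem _ _ huW) (Submodule.smul_mem _ _ hMuW)
    · push_neg at hdep
      obtain ⟨c, d, hcd, hne⟩ := hdep
      by_cases hd : d = 0
      · exfalso
        rw [hd, zero_smul, add_zero] at hcd
        rcases smul_eq_zero.1 hcd with hc | hu'
        · exact hne hc hd
        · exact hu hu'
      · have hMu : M.val *ᵥ u = (-c/d) • u := by
          funext j
          have hj := congrFun hcd j
          simp only [Pi.add_apply, Pi.smul_apply, smul_eq_mul, Pi.zero_apply] at hj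
          simp only [Pi.smul_apply, smul_eq_mul]
          field_simp
          linear_combination hj
        rw [hMu, mulVec_smul]
        exact Submodule.smul_mem _ _ hMuW
  have hinv : ∀ x ∈ W, M.val *ᵥ x ∈ W := by
    intro x hx
    obtain ⟨c, d, hcd⟩ := Submodule.mem_span_pair.1 hx
    rw [← hcd, mulVec_add, mulVec_smul, mulVec_smul]
    exact Submodule.add_mem _ (Submodule.smul_mem _ _ hMuW) (Submodule.smul_mem _ _ hM2)
  have hx0 : ∃ x : Fin 3 → F, x ∉ W := by
    by_contra hall
    push_neg at hall
    obtain ⟨c0, d0, h0'⟩ := Submodule.mem_span_pair.1 (hall ![1,0,0])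
    obtain ⟨c1, d1, h1'⟩ := Submodule.mem_span_pair.1 (hall ![0,1,0])
    obtain ⟨c2, d2, h2'⟩ := Submodule.mem_span_pair.1 (hall ![0,0,1])
    have hz : Dt (![1,0,0] : Fin 3 → F) ![0,1,0] ![0,0,1] = 0 := by
      rw [← h0', ← h1', ← h2']
      simp [Dt, Pi.add_apply, Pi.smul_apply, smul_eq_mul]
      ring
    simp [Dt] at hz
  obtain ⟨x0, hx0⟩ := hx0
  have hx0ne : x0 ≠ 0 := fun h => hx0 (h ▸ W.zero_mem)
  have horbit : ∀ k : ℕ, ∃ z : Fin 3 → F, ∃ hz : z ≠ 0, z ∈ W ∧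
      act^[k] (Projectivization.mk F u hu) = Projectivization.mk F z hz := by
    intro k
    induction k with
    | zero => exact ⟨u, hu, huW, rfl⟩
    | succ n ih =>
      obtain ⟨z, hz, hzW, hzk⟩ := ih
      refine ⟨M.val *ᵥ z, hMinj z hz, hinv z hzW, ?_⟩
      rw [Function.iterate_succ_apply', hzk, hact z hz (hMinj z hz)]
  obtain ⟨k, hkeq⟩ := hreg (Projectivization.mk F u hu) (Projectivization.mk F x0 hx0ne)
  obtain ⟨z, hz, hzW, hzk⟩ := horbit k
  rw [hzk] at hkeq
  obtain ⟨c, hc⟩ := (Projectivization.mk_eq_mk_iff F _ _ _ _).1 hkeq.symm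
  apply hx0
  rw [← hc]
  have : (c : F) • z ∈ W := Submodule.smul_mem _ _ hzW
  simpa [Units.smul_def] using this

/-- Steiner's conic from a Singer cycle.  Let `s` be the unique element of a
Singer cyclic group of PGL(3,q) (generated by the projectivity `act`, given
by a matrix `M`, regular on points; `actL`, given by the inverse-transpose
matrix, is its action on lines) with `A1^s = A2`, where `A1 ≠ A2`.  Then the
set of intersection points `r ∩ r^s`, as `r` ranges over the lines through
`A1`, is a nondegenerate conic `C` through `A1` and `A2`; moreover `s` maps
the tangent line to `C` at `A1` onto the line `A1A2`, and the line `A1A2`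
onto the tangent line to `C` at `A2`. -/
theorem steiner_conic_from_singer (F : Type*) [Field F] [Fintype F]
    (q : ℕ) (hq : Fintype.card F = q)
    (M : GL (Fin 3) F)
    (act actL : Projectivization F (Fin 3 → F) → Projectivization F (Fin 3 → F))
    (hact : ∀ (v : Fin 3 → F) (hv : v ≠ 0) (hv' : M.val.mulVec v ≠ 0),
      act (Projectivization.mk F v hv) = Projectivization.mk F (M.val.mulVec v) hv')
    (hactL : ∀ (u : Fin 3 → F) (hu : u ≠ 0)
      (hu' : ((M⁻¹ : GL (Fin 3) F).val.transpose).mulVec u ≠ 0),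
      actL (Projectivization.mk F u hu) =
        Projectivization.mk F (((M⁻¹ : GL (Fin 3) F).val.transpose).mulVec u) hu')
    (hreg : ∀ p p' : Projectivization F (Fin 3 → F),
      ∃! k : ℕ, k < q ^ 2 + q + 1 ∧ act^[k] p = p')
    (A1 A2 : Projectivization F (Fin 3 → F)) (hA : A1 ≠ A2)
    (hs : act A1 = A2) :
    ∃ a : Fin 6 → F, a ≠ 0 ∧ ¬ IsDegenerateBar F a ∧
      VanishAt a A1 ∧ VanishAt a A2 ∧
      (∀ p : Projectivization F (Fin 3 → F),
        VanishAt a p ↔ ∃ r, IncPL r A1 ∧ IncPL r p ∧ IncPL (actL r) p) ∧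
      (∀ l : Projectivization F (Fin 3 → F), IncPL l A1 → IncPL l A2 →
        (∀ t : Projectivization F (Fin 3 → F), IncPL t A1 →
          (∀ p, IncPL t p → VanishAt a p → p = A1) → actL t = l) ∧
        IncPL (actL l) A2 ∧
        ∀ p, IncPL (actL l) p → VanishAt a p → p = A2) := by
  classical
  -- basic setup
  have hreg' : ∀ p p' : Projectivization F (Fin 3 → F), ∃ k : ℕ, act^[k] p = p' := by
    intro p p'
    obtain ⟨k, ⟨_, hk⟩, -⟩ := hreg p p'
    exact ⟨k, hk⟩
  set w1 : Fin 3 → F := A1.rep with hw1def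
  have hw1 : w1 ≠ 0 := A1.rep_nonzero
  have hA1 : A1 = Projectivization.mk F w1 hw1 := (Projectivization.mk_rep A1).symm
  set L : Matrix (Fin 3) (Fin 3) F := (M⁻¹ : GL (Fin 3) F).val with hLdef
  have hLM : L * M.val = 1 := by
    rw [hLdef, ← Units.val_mul, inv_mul_cancel]; rfl
  have hML : M.val * L = 1 := by
    rw [hLdef, ← Units.val_mul, mul_inv_cancel]; rfl
  have hMLv : ∀ z : Fin 3 → F, M.val *ᵥ (L *ᵥ z) = z := by
    intro z; rw [mulVec_mulVec, hML, one_mulVec]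
  have hLMv : ∀ z : Fin 3 → F, L *ᵥ (M.val *ᵥ z) = z := by
    intro z; rw [mulVec_mulVec, hLM, one_mulVec]
  have hMinj : ∀ z : Fin 3 → F, z ≠ 0 → M.val *ᵥ z ≠ 0 := by
    intro z hz hzz
    exact hz (by rw [← hLMv z, hzz, mulVec_zero])
  have hLinj : ∀ z : Fin 3 → F, z ≠ 0 → L *ᵥ z ≠ 0 := by
    intro z hz hzz
    exact hz (by rw [← hMLv z, hzz, mulVec_zero])
  have hTv : ∀ z : Fin 3 → F, (M.val)ᵀ *ᵥ (Lᵀ *ᵥ z) = z := by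
    intro z
    rw [mulVec_mulVec, ← Matrix.transpose_mul, hLM, Matrix.transpose_one, one_mulVec]
  have hTinj : ∀ z : Fin 3 → F, z ≠ 0 → Lᵀ *ᵥ z ≠ 0 := by
    intro z hz hzz
    exact hz (by rw [← hTv z, hzz, mulVec_zero])
  -- the conic
  set a : Fin 6 → F := coeffs w1 L with hadef
  have hQ : ∀ x : Fin 3 → F, Qeval a x = Dt w1 x (L *ᵥ x) := fun x => Qeval_coeffs w1 L x
  -- A2 representation
  have hA2 : A2 = Projectivization.mk F (M.val *ᵥ w1) (hMinj w1 hw1) := by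
    rw [← hs, hA1]
    exact hact w1 hw1 (hMinj w1 hw1)
  -- the two key determinants
  have hDM : Dt w1 (M.val *ᵥ w1) (M.val *ᵥ (M.val *ᵥ w1)) ≠ 0 :=
    singer_key M act hact hreg' w1 hw1
  have hDL : Dt w1 (L *ᵥ w1) (L *ᵥ (L *ᵥ w1)) ≠ 0 := by
    have h := singer_key M act hact hreg' (L *ᵥ (L *ᵥ w1)) (hLinj _ (hLinj _ hw1))
    have e2 : M.val *ᵥ (M.val *ᵥ (L *ᵥ (L *ᵥ w1))) = w1 := by
      rw [hMLv, hMLv]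
    rw [e2, hMLv] at h
    intro hc
    apply h
    rw [Dt_rev, hc, neg_zero]
  -- independence of w1 and M w1
  have hind : ∀ c d : F, c • w1 + d • (M.val *ᵥ w1) = 0 → c = 0 ∧ d = 0 := by
    intro c d hcd
    by_cases hd : d = 0
    · refine ⟨?_, hd⟩
      rw [hd, zero_smul, add_zero] at hcd
      rcases smul_eq_zero.1 hcd with h | h
      · exact h
      · exact absurd h hw1
    · exfalso
      apply hA
      have hMu : M.val *ᵥ w1 = (-c/d) • w1 := by
        funext j
        have hj := congrFun hcd j
        simp only [Pi.add_apply, Pi.smul_apply, smul_eq_mul, Pi.zero_apply] at hj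
        simp only [Pi.smul_apply, smul_eq_mul]
        field_simp
        linear_combination hj
      have hcd0 : (-c/d) ≠ 0 := by
        intro h
        exact hMinj w1 hw1 (by rw [hMu, h, zero_smul])
      have hc0 : c ≠ 0 := by
        intro h
        exact hcd0 (by rw [h, neg_zero, zero_div])
      rw [hA1, hA2, Projectivization.mk_eq_mk_iff]
      refine ⟨Units.mk0 (-d/c) (by simp [hd, hc0]), ?_⟩
      rw [hMu]
      funext j
      simp only [Units.smul_def, Units.val_mk0, Pi.smul_apply, smul_eq_mul]
      field_simp
  -- T5 : characterization of the conic
  have hT5 : ∀ p, VanishAt a p ↔ ∃ r, IncPL r A1 ∧ IncPL r p ∧ IncPL (actL r) p := by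
    intro p
    constructor
    · rintro ⟨w, hw, hp, hQw⟩
      rw [hQ] at hQw
      by_cases hp1 : p = A1
      · have hcr : cr w1 (L *ᵥ w1) ≠ 0 := by
          intro h
          apply hDL
          rw [← dot_cr, h]
          simp
        refine ⟨Projectivization.mk F (cr w1 (L *ᵥ w1)) hcr, ?_, ?_, ?_⟩
        · rw [hA1]
          exact IncPL_mk hcr hw1 (by rw [dot_cr]; exact Dt_self13 _ _)
        · rw [hp1, hA1]
          exact IncPL_mk hcr hw1 (by rw [dot_cr]; exact Dt_self13 _ _)
        · rw [hactL _ hcr (hTinj _ hcr), hp1, hA1]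
          refine IncPL_mk (hTinj _ hcr) hw1 ?_
          rw [dot_transpose, dot_cr]
          exact Dt_self23 _ _
      · have hcrw : cr w1 w ≠ 0 := by
          intro h
          obtain ⟨c, hc⟩ := eq_smul_of_cr_eq_zero hw1 h
          have hc0 : c ≠ 0 := by
            intro h0
            exact hw (by rw [hc, h0, zero_smul])
          apply hp1
          rw [hp, hA1, Projectivization.mk_eq_mk_iff]
          exact ⟨Units.mk0 c hc0, by rw [hc]; simp [Units.smul_def]⟩
        refine ⟨Projectivization.mk F (cr w1 w) hcrw, ?_, ?_, ?_⟩
        · rw [hA1]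
          exact IncPL_mk hcrw hw1 (by rw [dot_cr]; exact Dt_self13 _ _)
        · rw [hp]
          exact IncPL_mk hcrw hw (by rw [dot_cr]; exact Dt_self23 _ _)
        · rw [hactL _ hcrw (hTinj _ hcrw), hp]
          refine IncPL_mk (hTinj _ hcrw) hw ?_
          rw [dot_transpose, dot_cr]
          exact hQw
    · rintro ⟨r, h1, h2, h3⟩
      set u : Fin 3 → F := r.rep with hudef
      have hu : u ≠ 0 := r.rep_nonzero
      have hr : r = Projectivization.mk F u hu := (Projectivization.mk_rep r).symm
      set w : Fin 3 → F := p.rep with hwdef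
      have hw : w ≠ 0 := p.rep_nonzero
      have hp : p = Projectivization.mk F w hw := (Projectivization.mk_rep p).symm
      have e1 : ∑ i, u i * w1 i = 0 := IncPL_elim h1 hu hw1 hr hA1
      have e2 : ∑ i, u i * w i = 0 := IncPL_elim h2 hu hw hr hp
      have e3 : ∑ i, (Lᵀ *ᵥ u) i * w i = 0 := by
        refine IncPL_elim h3 (hTinj _ hu) hw ?_ hp
        rw [hr]
        exact hactL u hu (hTinj _ hu)
      have e3' : ∑ i, u i * (L *ᵥ w) i = 0 := by
        rw [← dot_transpose]; exact e3
      refine ⟨w, hw, hp, ?_⟩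
      rw [hQ]
      exact det_zero_of_perp hu e1 e2 e3'
  -- assemble
  refine ⟨a, ?_, ?_, ?_, ?_, hT5, ?_⟩
  · -- a ≠ 0
    intro h
    apply hDL
    have := hQ (L *ᵥ w1)
    rw [h] at this
    rw [← this]
    simp [Qeval]
  · -- nondegenerate
    intro hdeg
    set K := AlgebraicClosure F
    set f : F →+* K := (algebraMap F K : F →+* K) with hfdef
    obtain ⟨u, v, huv⟩ := hdeg
    have hfinj : Function.Injective f := f.injective
    rw [hadef] at huv
    have hQK : ∀ x : Fin 3 → K, Dt (f ∘ w1) x ((L.map f) *ᵥ x) =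
        (∑ i, u i * x i) * (∑ i, v i * x i) := by
      intro x
      rw [← Qeval_coeffs, ← coeffs_map]
      exact huv x
    have hDK : Dt (f ∘ w1) ((L.map f) *ᵥ (f ∘ w1)) ((L.map f) *ᵥ ((L.map f) *ᵥ (f ∘ w1))) ≠ 0 := by
      rw [mulVec_map', mulVec_map', ← Dt_map]
      intro h
      exact hDL (hfinj (by rw [h, map_zero]))
    have hzero : (∑ i, u i * (f ∘ w1) i) * (∑ i, v i * (f ∘ w1) i) = 0 := by
      rw [← hQK (f ∘ w1)]
      exact Dt_self12 _ _
    rcases mul_eq_zero.1 hzero with h | h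
    · exact nondeg_aux (f ∘ w1) (L.map f) hDK u v hQK h
    · refine nondeg_aux (f ∘ w1) (L.map f) hDK v u ?_ h
      intro x
      rw [hQK x]
      ring
  · -- A1 on conic
    refine ⟨w1, hw1, hA1, ?_⟩
    rw [hQ]
    exact Dt_self12 _ _
  · -- A2 on conic
    refine ⟨M.val *ᵥ w1, hMinj w1 hw1, hA2, ?_⟩
    rw [hQ, hLMv]
    exact Dt_self13 _ _
  · -- tangent statements
    intro l hl1 hl2
    set u0 : Fin 3 → F := l.rep with hu0def
    have hu0 : u0 ≠ 0 := l.rep_nonzero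
    have hlr : l = Projectivization.mk F u0 hu0 := (Projectivization.mk_rep l).symm
    have e01 : ∑ i, u0 i * w1 i = 0 := IncPL_elim hl1 hu0 hw1 hlr hA1
    have e02 : ∑ i, u0 i * (M.val *ᵥ w1) i = 0 :=
      IncPL_elim hl2 hu0 (hMinj w1 hw1) hlr hA2
    have hcrA : cr w1 (M.val *ᵥ w1) ≠ 0 := by
      intro h
      obtain ⟨c, hc⟩ := eq_smul_of_cr_eq_zero hw1 h
      have := hind c (-1) (by rw [hc]; simp)
      exact absurd this.2 (by norm_num)
    refine ⟨?_, ?_, ?_⟩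
    · -- tangent at A1 maps to l
      intro t ht1 htonly
      set u : Fin 3 → F := t.rep with hudef
      have hu : u ≠ 0 := t.rep_nonzero
      have htr : t = Projectivization.mk F u hu := (Projectivization.mk_rep t).symm
      have eu1 : ∑ i, u i * w1 i = 0 := IncPL_elim ht1 hu hw1 htr hA1
      have habL : actL t = Projectivization.mk F (Lᵀ *ᵥ u) (hTinj _ hu) := by
        rw [htr]
        exact hactL u hu (hTinj _ hu)
      have etan : ∑ i, (Lᵀ *ᵥ u) i * w1 i = 0 := by
        by_cases hz : cr u (Lᵀ *ᵥ u) = 0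
        · obtain ⟨c, hc⟩ := eq_smul_of_cr_eq_zero hu hz
          rw [hc]
          simp only [Pi.smul_apply, smul_eq_mul, Fin.sum_univ_three] at eu1 ⊢
          linear_combination c * eu1
        · have hz1 : ∑ i, u i * cr u (Lᵀ *ᵥ u) i = 0 := by
            rw [dot_cr']
            exact Dt_self13 _ _
          have hz2 : ∑ i, (Lᵀ *ᵥ u) i * cr u (Lᵀ *ᵥ u) i = 0 := by
            rw [dot_cr']
            exact Dt_self23 _ _
          have hit : IncPL t (Projectivization.mk F (cr u (Lᵀ *ᵥ u)) hz) := by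
            rw [htr]
            exact IncPL_mk hu hz hz1
          have hpz : VanishAt a (Projectivization.mk F (cr u (Lᵀ *ᵥ u)) hz) := by
            rw [hT5]
            refine ⟨t, ht1, hit, ?_⟩
            rw [habL]
            exact IncPL_mk (hTinj _ hu) hz hz2
          have heq := htonly _ hit hpz
          rw [hA1, Projectivization.mk_eq_mk_iff] at heq
          obtain ⟨c, hc⟩ := heq
          have hwc : ∀ i, w1 i = ((c⁻¹ : Fˣ) : F) * cr u (Lᵀ *ᵥ u) i := by
            intro i
            have h' := congrFun hc i
            simp only [Units.smul_def, Pi.smul_apply, smul_eq_mul] at h'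
            rw [← h', ← mul_assoc, Units.inv_mul, one_mul]
          simp only [Fin.sum_univ_three] at hz2 ⊢
          rw [hwc 0, hwc 1, hwc 2]
          linear_combination ((c⁻¹ : Fˣ) : F) * hz2
      have etan2 : ∑ i, (Lᵀ *ᵥ u) i * (M.val *ᵥ w1) i = 0 := by
        rw [dot_transpose, hLMv]
        exact eu1
      obtain ⟨c1, hc1⟩ := perp_perp etan etan2 hcrA
      obtain ⟨c2, hc2⟩ := perp_perp e01 e02 hcrA
      have hc1z : c1 ≠ 0 := by
        intro h
        exact hTinj u hu (by rw [hc1, h, zero_smul])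
      have hc2z : c2 ≠ 0 := by
        intro h
        exact hu0 (by rw [hc2, h, zero_smul])
      rw [habL, hlr, Projectivization.mk_eq_mk_iff]
      refine ⟨Units.mk0 (c1/c2) (div_ne_zero hc1z hc2z), ?_⟩
      rw [hc1, hc2]
      funext j
      simp only [Units.smul_def, Pi.smul_apply, smul_eq_mul, Units.val_mk0]
      field_simp
    · -- actL l through A2
      rw [hlr, hactL u0 hu0 (hTinj _ hu0), hA2]
      refine IncPL_mk (hTinj _ hu0) (hMinj w1 hw1) ?_
      rw [dot_transpose, hLMv]
      exact e01
    · -- actL l meets conic only at A2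
      intro p hip hvp
      obtain ⟨w, hw, hpw, hQw⟩ := hvp
      rw [hQ] at hQw
      have e3 : ∑ i, (Lᵀ *ᵥ u0) i * w i = 0 := by
        refine IncPL_elim hip (hTinj _ hu0) hw ?_ hpw
        rw [hlr]
        exact hactL u0 hu0 (hTinj _ hu0)
      have e3' : ∑ i, u0 i * (L *ᵥ w) i = 0 := by
        rw [← dot_transpose]; exact e3
      have hdet2 : Dt w1 (M.val *ᵥ w1) (L *ᵥ w) = 0 :=
        det_zero_of_perp hu0 e01 e02 e3'
      obtain ⟨α, β, hLw⟩ := exists_comb hdet2 hind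
      have hwv : w = α • (M.val *ᵥ w1) + β • (M.val *ᵥ (M.val *ᵥ w1)) := by
        have h1 : w = M.val *ᵥ (L *ᵥ w) := (hMLv w).symm
        rw [h1, hLw, mulVec_add, mulVec_smul, mulVec_smul]
      have hβ : β = 0 := by
        have hred : Dt w1 (α • (M.val *ᵥ w1) + β • (M.val *ᵥ (M.val *ᵥ w1)))
            (α • w1 + β • (M.val *ᵥ w1)) =
            -(β^2) * Dt w1 (M.val *ᵥ w1) (M.val *ᵥ (M.val *ᵥ w1)) := by
          simp [Dt, Pi.add_apply, Pi.smul_apply, smul_eq_mul]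
          ring
        rw [hLw, hwv] at hQw
        rw [hred] at hQw
        rcases mul_eq_zero.1 hQw with h | h
        · have hb2 : β ^ 2 = 0 := neg_eq_zero.1 h
          exact pow_eq_zero_iff (n := 2) (by norm_num) |>.1 hb2
        · exact absurd h hDM
      have hα : α ≠ 0 := by
        intro h
        apply hw
        rw [hwv, hβ, h, zero_smul, zero_smul, add_zero]
      rw [hpw, hA2, Projectivization.mk_eq_mk_iff]
      refine ⟨Units.mk0 α hα, ?_⟩
      rw [hwv, hβ]
      funext j
      simp [Units.smul_def]
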